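/- (Another type of the derivation relation for finite multiple zeta values, 𝒜-version.) For every integer l ≥ 1 and every element w of 𝔥y, one has Z_𝒜(x^{l-1}y·w + δ_l(w)) = 0; equivalently, Z_𝒜(L_z^{-1}δ_l L_z(w)) = 0, where L_z denotes left multiplication by z = x+y. -/

import Mathlib

noncomputable section

namespace FMZVNote

/-- The noncommutative polynomial ring `𝔥 = ℚ⟨x,y⟩` in two indeterminates `x`, `y`. -/
abbrev H : Type := FreeAlgebra ℚ (Fin 2)

/-- The generator `x`. -/
def x : H := FreeAlgebra.ι ℚ 0

/-- The generator `y`. -/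
def y : H := FreeAlgebra.ι ℚ 1

/-- `z = x + y`. -/
def z : H := x + y

/-- `z_k = x^{k-1} y`. -/
def zk (k : ℕ) : H := x ^ (k - 1) * y

/-- The word `z_{k_1} ⋯ z_{k_r}` associated to an index `(k_1, …, k_r)`. -/
def zword (ks : List ℕ) : H := (ks.map zk).prod

/-- The ideal `⊕_p ℤ/pℤ` of finitely supported elements of `∏_p ℤ/pℤ`. -/
def finSupportIdeal : Ideal (∀ p : Nat.Primes, ZMod p) where
  carrier := {f | {p : Nat.Primes | f p ≠ 0}.Finite}
  zero_mem' := by simp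
  add_mem' := by
    intro a b ha hb
    refine (ha.union hb).subset ?_
    intro p hp
    simp only [Set.mem_setOf_eq, Set.mem_union]
    by_contra h
    push_neg at h
    exact hp (by simp [h.1, h.2])
  smul_mem' := by
    intro c f hf
    refine hf.subset ?_
    intro p hp
    simp only [Set.mem_setOf_eq] at hp ⊢
    intro h
    exact hp (by simp [h])

/-- The ring `𝒜 = (∏_p ℤ/pℤ)/(⊕_p ℤ/pℤ)`, where `p` runs over all primes. -/
abbrev Acal : Type := (∀ p : Nat.Primes, ZMod p) ⧸ finSupportIdeal

theorem Acal.isUnit_intCast (n : ℤ) (hn : n ≠ 0) : IsUnit ((n : ℤ) : Acal) := by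
  refine IsUnit.of_mul_eq_one
    (Ideal.Quotient.mk finSupportIdeal fun p => ((n : ZMod p))⁻¹) ?_
  have h1 : ((n : ℤ) : Acal)
      = Ideal.Quotient.mk finSupportIdeal (fun p => ((n : ZMod p))) := by
    rw [← map_intCast (Ideal.Quotient.mk finSupportIdeal) n]
    rfl
  rw [h1, ← map_mul, ← map_one (Ideal.Quotient.mk finSupportIdeal), Ideal.Quotient.eq]
  have hfin : {p : Nat.Primes | ((n : ZMod (p : ℕ))) = 0}.Finite := by
    have hsub : {p : Nat.Primes | ((n : ZMod (p : ℕ))) = 0} ⊆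
        (fun p : Nat.Primes => (p : ℕ)) ⁻¹' (Set.Iic n.natAbs) := by
      intro p hp
      simp only [Set.mem_setOf_eq] at hp
      haveI : NeZero (p : ℕ) := ⟨p.2.ne_zero⟩
      rw [ZMod.intCast_zmod_eq_zero_iff_dvd] at hp
      have hd : (p : ℕ) ∣ n.natAbs := by
        have := Int.natAbs_dvd_natAbs.mpr hp
        simpa using this
      exact Nat.le_of_dvd (Int.natAbs_pos.mpr hn) hd
    exact ((Set.finite_Iic _).preimage
      (fun a _ b _ h => Subtype.ext h)).subset hsub
  refine hfin.subset ?_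
  intro p hp
  simp only [Set.mem_setOf_eq] at hp ⊢
  by_contra h
  apply hp
  haveI : Fact (p : ℕ).Prime := ⟨p.2⟩
  simp [mul_inv_cancel₀ h]

/-- Every nonzero integer is invertible in `𝒜`, so `𝒜` is a `ℚ`-algebra. -/
instance : Algebra ℚ Acal :=
  (IsLocalization.lift (M := nonZeroDivisors ℤ) (S := ℚ)
    (g := Int.castRingHom Acal)
    (fun v => Acal.isUnit_intCast v.1 (nonZeroDivisors.ne_zero v.2))).toAlgebra

instance : Module ℚ Acal := Algebra.toModule

/-- The finite multiple zeta value `ζ_𝒜(k_1,…,k_r)`, the class in `𝒜` of the tuple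
`(Σ_{p>n_1>⋯>n_r≥1} 1/(n_1^{k_1}⋯n_r^{k_r}) mod p)_p`. -/
def zetaA (k : List ℕ) : Acal :=
  Ideal.Quotient.mk finSupportIdeal fun p =>
    ∑ n : Fin k.length → Fin p,
      if (∀ i, 0 < (n i : ℕ)) ∧
          (∀ i j : Fin k.length, i < j → (n j : ℕ) < (n i : ℕ)) then
        ∏ i, ((((n i : ℕ) : ZMod p)) ^ k.get i)⁻¹
      else 0


/-! ### Auxiliary arithmetic material -/

/-- Truncated multiple harmonic sum mod p, recursively. -/
def Sa (p : ℕ) : List ℕ → ℕ → ZMod p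
  | [] => fun _ => 1
  | k :: ks => fun N => ∑ n ∈ Finset.Ico 1 N, (((n : ℕ) : ZMod p) ^ k)⁻¹ * Sa p ks n

@[simp] lemma Sa_nil (p N : ℕ) : Sa p [] N = 1 := rfl

lemma Sa_cons (p k N : ℕ) (ks : List ℕ) :
    Sa p (k :: ks) N = ∑ n ∈ Finset.Ico 1 N, (((n : ℕ) : ZMod p) ^ k)⁻¹ * Sa p ks n := rfl

lemma Sa_single (p l N : ℕ) :
    Sa p [l] N = ∑ n ∈ Finset.Ico 1 N, (((n : ℕ) : ZMod p) ^ l)⁻¹ := by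
  simp [Sa_cons]

/-- The list of index lists appearing in the expansion of `z_l w + δ_l w`. -/
def Expand (l : ℕ) : List ℕ → List (List ℕ)
  | [] => [[l]]
  | k :: ks => (l :: k :: ks) :: ((k + l) :: ks) :: (Expand l ks).map (k :: ·)

lemma list_sum_map_sum {α β R : Type*} [AddCommMonoid R] (L : List α) (s : Finset β)
    (g : β → α → R) :
    (L.map (fun t => ∑ m ∈ s, g m t)).sum = ∑ m ∈ s, (L.map (g m)).sum := by
  induction L with
  | nil => simp
  | cons a L ih => simp [ih, Finset.sum_add_distrib]

lemma Ico_swap {R : Type*} [AddCommMonoid R] (N : ℕ) (f : ℕ → ℕ → R) :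
    ∑ m ∈ Finset.Ico 1 N, ∑ n ∈ Finset.Ico 1 m, f m n
      = ∑ n ∈ Finset.Ico 1 N, ∑ m ∈ Finset.Ico (n + 1) N, f m n := by
  have h1 : ∀ m ∈ Finset.Ico 1 N, ∑ n ∈ Finset.Ico 1 m, f m n
      = ∑ n ∈ Finset.Ico 1 N, if n < m then f m n else 0 := by
    intro m hm
    rw [← Finset.sum_filter]
    congr 1
    rw [Finset.Ico_filter_lt]
    congr 1
    simp only [Finset.mem_Ico] at hm
    omega
  rw [Finset.sum_congr rfl h1, Finset.sum_comm]
  refine Finset.sum_congr rfl fun n hn => ?_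
  rw [← Finset.sum_filter]
  congr 1
  ext m
  simp only [Finset.mem_filter, Finset.mem_Ico]
  omega

lemma stuffle (p : ℕ) [Fact p.Prime] (l : ℕ) (ks : List ℕ) : ∀ (N : ℕ),
    ((Expand l ks).map (fun t => Sa p t N)).sum = Sa p [l] N * Sa p ks N := by
  induction ks with
  | nil => intro N; simp [Expand]
  | cons k ks ih =>
    intro N
    simp only [Expand, List.map_cons, List.sum_cons, List.map_map]
    have h3 : ((Expand l ks).map ((fun t => Sa p t N) ∘ (k :: ·))).sum
        = ∑ m ∈ Finset.Ico 1 N, (((m : ℕ) : ZMod p) ^ k)⁻¹ * (Sa p [l] m * Sa p ks m) := by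
      have h0 : ((Expand l ks).map ((fun t => Sa p t N) ∘ (k :: ·))).sum
          = ((Expand l ks).map
              (fun t => ∑ m ∈ Finset.Ico 1 N, (((m : ℕ) : ZMod p) ^ k)⁻¹ * Sa p t m)).sum := by
        rfl
      rw [h0, list_sum_map_sum]
      refine Finset.sum_congr rfl fun m _ => ?_
      rw [List.sum_map_mul_left, ih m]
    rw [h3]
    have hsplit : ∀ n ∈ Finset.Ico 1 N, Sa p [l] N
        = Sa p [l] n + ((((n : ℕ) : ZMod p)) ^ l)⁻¹
            + ∑ m ∈ Finset.Ico (n + 1) N, (((m : ℕ) : ZMod p) ^ l)⁻¹ := by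
      intro n hn
      simp only [Finset.mem_Ico] at hn
      rw [Sa_single, Sa_single,
        ← Finset.sum_Ico_consecutive (fun m => (((m : ℕ) : ZMod p) ^ l)⁻¹) hn.1 (le_of_lt hn.2),
        Finset.sum_eq_sum_Ico_succ_bot hn.2, add_assoc]
    have hRHS : Sa p [l] N * Sa p (k :: ks) N
        = (∑ n ∈ Finset.Ico 1 N, (((n : ℕ) : ZMod p) ^ k)⁻¹ * (Sa p [l] n * Sa p ks n))
          + ((∑ n ∈ Finset.Ico 1 N, (((n : ℕ) : ZMod p) ^ (k + l))⁻¹ * Sa p ks n)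
          + (∑ n ∈ Finset.Ico 1 N,
              (∑ m ∈ Finset.Ico (n + 1) N, (((m : ℕ) : ZMod p) ^ l)⁻¹)
                * ((((n : ℕ) : ZMod p) ^ k)⁻¹ * Sa p ks n))) := by
      rw [Sa_cons p k N ks, Finset.mul_sum, ← Finset.sum_add_distrib, ← Finset.sum_add_distrib]
      refine Finset.sum_congr rfl fun n hn => ?_
      rw [hsplit n hn, pow_add, mul_inv]
      ring
    have eq1 : Sa p (l :: k :: ks) N
        = ∑ n ∈ Finset.Ico 1 N,
            (∑ m ∈ Finset.Ico (n + 1) N, (((m : ℕ) : ZMod p) ^ l)⁻¹)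
              * ((((n : ℕ) : ZMod p) ^ k)⁻¹ * Sa p ks n) := by
      rw [Sa_cons p l N (k :: ks)]
      have h1 : ∀ m ∈ Finset.Ico 1 N, (((m : ℕ) : ZMod p) ^ l)⁻¹ * Sa p (k :: ks) m
          = ∑ n ∈ Finset.Ico 1 m,
              (((m : ℕ) : ZMod p) ^ l)⁻¹ * ((((n : ℕ) : ZMod p) ^ k)⁻¹ * Sa p ks n) := by
        intro m _
        rw [Sa_cons p k m ks, Finset.mul_sum]
      rw [Finset.sum_congr rfl h1, Ico_swap]
      refine Finset.sum_congr rfl fun n _ => ?_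
      rw [Finset.sum_mul]
    have eq2 : Sa p ((k + l) :: ks) N
        = ∑ n ∈ Finset.Ico 1 N, (((n : ℕ) : ZMod p) ^ (k + l))⁻¹ * Sa p ks n :=
      Sa_cons p (k + l) N ks
    rw [hRHS, eq1, eq2]
    ring

lemma Sa_single_self_eq_zero (p l : ℕ) [hp : Fact p.Prime] (hl : 1 ≤ l) (hlp : l + 1 < p) :
    Sa p [l] p = 0 := by
  have h0 : Sa p [l] p = ∑ n ∈ Finset.range p, (((n : ℕ) : ZMod p) ^ l)⁻¹ := by
    rw [Sa_single, Finset.range_eq_Ico,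
      Finset.sum_eq_sum_Ico_succ_bot (by omega : 0 < p)]
    simp [zero_pow (by omega : l ≠ 0)]
  haveI : NeZero p := ⟨hp.out.ne_zero⟩
  have h1 : ∑ n ∈ Finset.range p, (((n : ℕ) : ZMod p) ^ l)⁻¹
      = ∑ a : ZMod p, (a ^ l)⁻¹ := by
    refine Finset.sum_nbij' (fun n => ((n : ℕ) : ZMod p)) (fun a => a.val) ?_ ?_ ?_ ?_ ?_
    · intro n _; exact Finset.mem_univ _
    · intro a _; exact Finset.mem_range.2 (ZMod.val_lt a)
    · intro n hn; exact ZMod.val_cast_of_lt (Finset.mem_range.1 hn)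
    · intro a _; simp [ZMod.natCast_val, ZMod.cast_id]
    · intro n _; rfl
  have h2 : ∑ a : ZMod p, (a ^ l)⁻¹ = ∑ a : ZMod p, a ^ l := by
    rw [show (fun a : ZMod p => (a ^ l)⁻¹) = fun a : ZMod p => (a⁻¹) ^ l from
      funext fun a => (inv_pow a l).symm]
    exact Fintype.sum_bijective (·⁻¹) (inv_involutive.bijective) _ _ fun a => rfl
  have h3 : ∑ a : ZMod p, a ^ l = 0 := by
    have : l < Fintype.card (ZMod p) - 1 := by rw [ZMod.card]; omega
    exact FiniteField.sum_pow_lt_card_sub_one (K := ZMod p) l this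
  rw [h0, h1, h2, h3]

lemma G_eq (p : ℕ) (t : List ℕ) : ∀ (N : ℕ), N ≤ p →
    (∑ n : Fin t.length → Fin p,
      if (∀ i, 0 < (n i : ℕ)) ∧
          (∀ i j : Fin t.length, i < j → (n j : ℕ) < (n i : ℕ)) ∧
          (∀ i, (n i : ℕ) < N) then
        ∏ i, ((((n i : ℕ) : ZMod p)) ^ t.get i)⁻¹
      else 0) = Sa p t N := by
  induction t with
  | nil =>
      intro N _
      simp
  | cons k ks ih =>
      intro N hN
      have hA : (∑ n : Fin (ks.length + 1) → Fin p,
          if (∀ i, 0 < (n i : ℕ)) ∧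
              (∀ i j : Fin (ks.length + 1), i < j → (n j : ℕ) < (n i : ℕ)) ∧
              (∀ i, (n i : ℕ) < N) then
            ∏ i, ((((n i : ℕ) : ZMod p)) ^ List.get (k :: ks) i)⁻¹
          else 0)
          = ∑ m : Fin p, ∑ g : Fin ks.length → Fin p,
              (if (∀ i, 0 < ((Fin.cons (α := fun _ => Fin p) m g) i : ℕ)) ∧
                  (∀ i j : Fin (ks.length + 1), i < j →
                    ((Fin.cons (α := fun _ => Fin p) m g) j : ℕ)
                      < ((Fin.cons (α := fun _ => Fin p) m g) i : ℕ)) ∧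
                  (∀ i, ((Fin.cons (α := fun _ => Fin p) m g) i : ℕ) < N) then
                ∏ i, (((((Fin.cons (α := fun _ => Fin p) m g) i : Fin p) : ℕ) : ZMod p)
                    ^ List.get (k :: ks) i)⁻¹
              else 0) := by
        rw [← Equiv.sum_comp (Fin.consEquiv fun _ : Fin (ks.length + 1) => Fin p),
          Fintype.sum_prod_type]
        rfl
      have hprod : ∀ (m : Fin p) (g : Fin ks.length → Fin p),
          (∏ i, (((((Fin.cons (α := fun _ => Fin p) m g) i : Fin p) : ℕ) : ZMod p)
              ^ List.get (k :: ks) i)⁻¹)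
            = (((m : ℕ) : ZMod p) ^ k)⁻¹
              * ∏ i, ((((g i : ℕ) : ZMod p)) ^ ks.get i)⁻¹ := by
        intro m g
        rw [Fin.prod_univ_succ]
        simp [Fin.cons_zero, Fin.cons_succ]
      have hc : ∀ (m : Fin p) (g : Fin ks.length → Fin p),
          ((∀ i, 0 < ((Fin.cons (α := fun _ => Fin p) m g) i : ℕ)) ∧
            (∀ i j : Fin (ks.length + 1), i < j →
              ((Fin.cons (α := fun _ => Fin p) m g) j : ℕ)
                < ((Fin.cons (α := fun _ => Fin p) m g) i : ℕ)) ∧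
            (∀ i, ((Fin.cons (α := fun _ => Fin p) m g) i : ℕ) < N))
          ↔ ((1 ≤ (m : ℕ) ∧ (m : ℕ) < N) ∧
              ((∀ i, 0 < (g i : ℕ)) ∧
               (∀ i j : Fin ks.length, i < j → (g j : ℕ) < (g i : ℕ)) ∧
               (∀ i, (g i : ℕ) < (m : ℕ)))) := by
        intro m g
        constructor
        · rintro ⟨h1, h2, h3⟩
          refine ⟨⟨?_, ?_⟩, ?_, ?_, ?_⟩
          · exact Nat.succ_le_of_lt (by simpa using h1 0)
          · simpa using h3 0
          · intro i; simpa using h1 i.succ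
          · intro i j hij
            simpa using h2 i.succ j.succ (Fin.succ_lt_succ_iff.2 hij)
          · intro i; simpa using h2 0 i.succ (Fin.succ_pos i)
        · rintro ⟨⟨hm1, hm2⟩, hg1, hg2, hg3⟩
          refine ⟨?_, ?_, ?_⟩
          · intro i
            rcases Fin.eq_zero_or_eq_succ i with hi | ⟨i', rfl⟩
            · rw [hi]; simpa using Nat.lt_of_lt_of_le Nat.zero_lt_one hm1
            · simpa using hg1 i'
          · intro i j hij
            rcases Fin.eq_zero_or_eq_succ j with hj | ⟨j', rfl⟩
            · rw [hj] at hij; exact absurd hij (by simp)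
            · rcases Fin.eq_zero_or_eq_succ i with hi | ⟨i', rfl⟩
              · rw [hi]; simpa using hg3 j'
              · have hij' : i' < j' := Fin.succ_lt_succ_iff.1 hij
                simpa using hg2 i' j' hij'
          · intro i
            rcases Fin.eq_zero_or_eq_succ i with hi | ⟨i', rfl⟩
            · rw [hi]; simpa using hm2
            · simpa using lt_trans (hg3 i') hm2
      have hB : ∀ m : Fin p,
          (∑ g : Fin ks.length → Fin p,
            (if (∀ i, 0 < ((Fin.cons (α := fun _ => Fin p) m g) i : ℕ)) ∧
                (∀ i j : Fin (ks.length + 1), i < j →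
                  ((Fin.cons (α := fun _ => Fin p) m g) j : ℕ)
                    < ((Fin.cons (α := fun _ => Fin p) m g) i : ℕ)) ∧
                (∀ i, ((Fin.cons (α := fun _ => Fin p) m g) i : ℕ) < N) then
              ∏ i, (((((Fin.cons (α := fun _ => Fin p) m g) i : Fin p) : ℕ) : ZMod p)
                  ^ List.get (k :: ks) i)⁻¹
            else 0))
          = (if 1 ≤ (m : ℕ) ∧ (m : ℕ) < N then
              (((m : ℕ) : ZMod p) ^ k)⁻¹ * Sa p ks (m : ℕ) else 0) := by
        intro m
        have hsummand : ∀ g : Fin ks.length → Fin p,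
            (if (∀ i, 0 < ((Fin.cons (α := fun _ => Fin p) m g) i : ℕ)) ∧
                (∀ i j : Fin (ks.length + 1), i < j →
                  ((Fin.cons (α := fun _ => Fin p) m g) j : ℕ)
                    < ((Fin.cons (α := fun _ => Fin p) m g) i : ℕ)) ∧
                (∀ i, ((Fin.cons (α := fun _ => Fin p) m g) i : ℕ) < N) then
              ∏ i, (((((Fin.cons (α := fun _ => Fin p) m g) i : Fin p) : ℕ) : ZMod p)
                  ^ List.get (k :: ks) i)⁻¹
            else 0)
            = (if (1 ≤ (m : ℕ) ∧ (m : ℕ) < N) ∧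
                  ((∀ i, 0 < (g i : ℕ)) ∧
                   (∀ i j : Fin ks.length, i < j → (g j : ℕ) < (g i : ℕ)) ∧
                   (∀ i, (g i : ℕ) < (m : ℕ))) then
                (((m : ℕ) : ZMod p) ^ k)⁻¹ * ∏ i, ((((g i : ℕ) : ZMod p)) ^ ks.get i)⁻¹
              else 0) := by
          intro g
          exact if_congr (hc m g) (hprod m g) rfl
        rw [Finset.sum_congr rfl fun g _ => hsummand g]
        by_cases hA' : 1 ≤ (m : ℕ) ∧ (m : ℕ) < N
        · simp only [hA', true_and, if_true]
          rw [← ih (m : ℕ) (le_of_lt m.isLt), Finset.mul_sum]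
          exact Finset.sum_congr rfl fun g _ => by rw [mul_ite, mul_zero]
        · simp [hA']
      have hC : (∑ m : Fin p,
          (if 1 ≤ (m : ℕ) ∧ (m : ℕ) < N then
              (((m : ℕ) : ZMod p) ^ k)⁻¹ * Sa p ks (m : ℕ) else 0))
          = Sa p (k :: ks) N := by
        rw [Fin.sum_univ_eq_sum_range (fun n =>
          if 1 ≤ n ∧ n < N then ((n : ZMod p) ^ k)⁻¹ * Sa p ks n else 0) p]
        rw [Sa_cons, ← Finset.sum_filter]
        apply Finset.sum_congr _ (fun _ _ => rfl)
        ext n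
        simp only [Finset.mem_filter, Finset.mem_range, Finset.mem_Ico]
        omega
      exact hA.trans ((Finset.sum_congr rfl fun m _ => hB m).trans hC)


lemma list_sum_pi_apply {ι : Type*} {β : ι → Type*} [∀ i, AddCommMonoid (β i)]
    (L : List (∀ i, β i)) (i : ι) : L.sum i = (L.map (fun f => f i)).sum := by
  induction L with
  | nil => rfl
  | cons f L ih => simp [ih]

lemma zetaA_eq_mk (t : List ℕ) :
    zetaA t = Ideal.Quotient.mk finSupportIdeal
      (fun p : Nat.Primes => Sa (p : ℕ) t (p : ℕ)) := by
  unfold zetaA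
  congr 1
  funext p
  rw [← G_eq (p : ℕ) t (p : ℕ) le_rfl]
  refine Finset.sum_congr rfl fun n _ => ?_
  exact if_congr ⟨fun h => ⟨h.1, h.2, fun i => (n i).isLt⟩, fun h => ⟨h.1, h.2.1⟩⟩ rfl rfl

lemma Expand_forall_pos (l : ℕ) (hl : 1 ≤ l) :
    ∀ (ks : List ℕ), (∀ k ∈ ks, 1 ≤ k) → ∀ t ∈ Expand l ks, ∀ k ∈ t, 1 ≤ k := by
  intro ks
  induction ks with
  | nil =>
      intro _ t ht
      simp only [Expand, List.mem_singleton] at ht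
      subst ht
      simpa using hl
  | cons k ks ih =>
      intro hks t ht
      simp only [Expand, List.mem_cons, List.mem_map] at ht
      rcases ht with rfl | rfl | ⟨t', ht', rfl⟩
      · intro a ha
        rcases List.mem_cons.1 ha with rfl | ha'
        · exact hl
        · exact hks a ha'
      · intro a ha
        rcases List.mem_cons.1 ha with rfl | ha'
        · have := hks k (by simp); omega
        · exact hks a (by simp [ha'])
      · intro a ha
        rcases List.mem_cons.1 ha with rfl | ha'
        · exact hks a (by simp)
        · exact ih (fun b hb => hks b (by simp [hb])) t' ht' a ha'

/-! ### Word lemmas in `H` -/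

lemma zword_nil : zword [] = 1 := by simp [zword]

lemma zword_cons (k : ℕ) (ks : List ℕ) : zword (k :: ks) = zk k * zword ks := by
  simp [zword]

lemma zk_one : zk 1 = y := by simp [zk]

lemma zword_one : zword [1] = y := by simp [zword, zk]

lemma x_mul_zk (k : ℕ) (hk : 1 ≤ k) : x * zk k = zk (k + 1) := by
  rw [zk, zk, ← mul_assoc, ← pow_succ']
  congr 2
  omega

/-- The set of words `z_{k_1}⋯z_{k_r}` with `r ≥ 1` and all `k_i ≥ 1`. -/
def wordSet : Set H :=
  {h : H | ∃ ks : List ℕ, ks ≠ [] ∧ (∀ k ∈ ks, 1 ≤ k) ∧ h = zword ks}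

lemma mul_mem_span_wordSet (a : H) :
    ∀ h ∈ Submodule.span ℚ wordSet, a * h ∈ Submodule.span ℚ wordSet := by
  induction a using FreeAlgebra.induction with
  | grade0 r =>
      intro h hh
      rw [← Algebra.smul_def]
      exact Submodule.smul_mem _ r hh
  | grade1 i =>
      intro h hh
      have hxy : ∀ g : H,
          (∀ ks : List ℕ, ks ≠ [] → (∀ k ∈ ks, 1 ≤ k) →
            g * zword ks ∈ Submodule.span ℚ wordSet) →
          g * h ∈ Submodule.span ℚ wordSet := by
        intro g hg
        refine Submodule.span_induction
          (p := fun h _ => g * h ∈ Submodule.span ℚ wordSet) ?_ ?_ ?_ ?_ hh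
        · rintro _ ⟨ks, hne, hks, rfl⟩; exact hg ks hne hks
        · show g * (0 : H) ∈ Submodule.span ℚ wordSet
          rw [mul_zero]; exact zero_mem _
        · intro a b _ _ ha hb
          show g * (a + b) ∈ Submodule.span ℚ wordSet
          rw [mul_add]; exact add_mem ha hb
        · intro c a _ ha
          show g * (c • a) ∈ Submodule.span ℚ wordSet
          rw [mul_smul_comm]; exact Submodule.smul_mem _ c ha
      fin_cases i
      · show x * h ∈ Submodule.span ℚ wordSet
        refine hxy x ?_
        intro ks hne hks
        match ks, hne with
        | k :: ks', _ =>
          rw [zword_cons, ← mul_assoc, x_mul_zk k (hks k (by simp)), ← zword_cons]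
          refine Submodule.subset_span ⟨(k + 1) :: ks', by simp, ?_, rfl⟩
          intro a ha
          rcases List.mem_cons.1 ha with rfl | ha'
          · omega
          · exact hks a (by simp [ha'])
      · show y * h ∈ Submodule.span ℚ wordSet
        refine hxy y ?_
        intro ks hne hks
        rw [← zk_one, ← zword_cons]
        refine Submodule.subset_span ⟨1 :: ks, by simp, ?_, rfl⟩
        intro a ha
        rcases List.mem_cons.1 ha with rfl | ha'
        · exact le_refl 1
        · exact hks a ha'
  | mul a b iha ihb =>
      intro h hh
      rw [mul_assoc]
      exact iha _ (ihb h hh)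
  | add a b iha ihb =>
      intro h hh
      rw [add_mul]
      exact add_mem (iha h hh) (ihb h hh)

set_option synthInstance.maxHeartbeats 1000000
set_option maxHeartbeats 1600000

/-- **Another type of the derivation relation for finite multiple zeta values**,
`𝒜`-version.  For every `l ≥ 1` and every `w ∈ 𝔥y`, one has
`Z_𝒜(x^{l-1}y·w + δ_l(w)) = 0`, i.e. `Z_𝒜(L_z⁻¹ δ_l L_z (w)) = 0`. -/
theorem another_derivation_relation_fmzv_A
    (l : ℕ) (hl : 1 ≤ l)
    (Z : H →ₗ[ℚ] Acal) (hZone : Z 1 = 1)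
    (hZ : ∀ ks : List ℕ, (∀ k ∈ ks, 1 ≤ k) → Z (zword ks) = zetaA ks)
    (D : H →ₗ[ℚ] H)
    (hDleibniz : ∀ a b : H, D (a * b) = D a * b + a * D b)
    (hDx : D x = 0) (hDy : D y = z * x ^ (l - 1) * y)
    (w : H) (v : H) (hw : w = v * y) :
    Z (x ^ (l - 1) * y * w + D w) = 0 := by
  -- basic consequences of the Leibniz rule
  have hD1 : D 1 = 0 := by
    have h := hDleibniz 1 1
    simp only [one_mul, mul_one] at h
    exact (left_eq_add.mp h)
  have hDxpow : ∀ n : ℕ, D (x ^ n) = 0 := by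
    intro n
    induction n with
    | zero => simpa using hD1
    | succ n ih => rw [pow_succ, hDleibniz, ih, hDx, zero_mul, mul_zero, add_zero]
  have hDzk : ∀ k, 1 ≤ k → D (zk k) = zk (k + l) + zk k * zk l := by
    intro k hk
    have e1 : x ^ (k - 1) * (x * (x ^ (l - 1) * y)) = x ^ (k + l - 1) * y := by
      rw [← mul_assoc, ← mul_assoc, ← pow_succ, ← pow_add]
      have : k - 1 + 1 + (l - 1) = k + l - 1 := by omega
      rw [this]
    show D (x ^ (k - 1) * y) = zk (k + l) + zk k * zk l
    rw [hDleibniz, hDxpow, zero_mul, zero_add, hDy]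
    simp only [zk, z, add_mul, mul_add, mul_assoc]
    rw [e1]
  -- the expansion of `z_l w + δ_l w` into words
  have hexp : ∀ ks : List ℕ, (∀ k ∈ ks, 1 ≤ k) →
      zk l * zword ks + D (zword ks) = ((Expand l ks).map zword).sum := by
    intro ks
    induction ks with
    | nil =>
        intro _
        simp [Expand, zword, hD1]
    | cons k ks ih =>
        intro hks
        have hk : 1 ≤ k := hks k (by simp)
        have ih' := ih fun b hb => hks b (by simp [hb])
        rw [zword_cons, hDleibniz, hDzk k hk]
        have hsum : ((Expand l (k :: ks)).map zword).sum
            = zword (l :: k :: ks) + (zword ((k + l) :: ks)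
              + ((Expand l ks).map (fun t => zk k * zword t)).sum) := by
          simp only [Expand, List.map_cons, List.sum_cons, List.map_map]
          have hmap : List.map (zword ∘ (k :: ·)) (Expand l ks)
              = List.map (fun t => zk k * zword t) (Expand l ks) :=
            List.map_congr_left fun t _ => by simp [Function.comp, zword_cons]
          rw [hmap]
        rw [hsum, List.sum_map_mul_left, ← ih', zword_cons, zword_cons, zword_cons]
        noncomm_ring
  -- vanishing on each admissible word
  have key : ∀ ks : List ℕ, (∀ k ∈ ks, 1 ≤ k) →
      Z (x ^ (l - 1) * y * zword ks + D (zword ks)) = 0 := by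
    intro ks hks
    have h1 : Z (x ^ (l - 1) * y * zword ks + D (zword ks))
        = (((Expand l ks).map zword).map Z).sum := by
      rw [show x ^ (l - 1) * y = zk l from rfl, hexp ks hks]
      exact map_list_sum Z _
    have h2 : (((Expand l ks).map zword).map Z).sum
        = (((Expand l ks).map (fun (t : List ℕ) (p : Nat.Primes) => Sa (p : ℕ) t (p : ℕ))).map
            (Ideal.Quotient.mk finSupportIdeal)).sum := by
      rw [List.map_map, List.map_map]
      refine congrArg List.sum (List.map_congr_left fun t ht => ?_)
      have h := (hZ t (Expand_forall_pos l hl ks hks t ht)).trans (zetaA_eq_mk t)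
      simpa [Function.comp] using h
    have h3 : (((Expand l ks).map (fun (t : List ℕ) (p : Nat.Primes) => Sa (p : ℕ) t (p : ℕ))).map
          (Ideal.Quotient.mk finSupportIdeal)).sum
        = Ideal.Quotient.mk finSupportIdeal
            (fun p : Nat.Primes => Sa (p : ℕ) [l] (p : ℕ) * Sa (p : ℕ) ks (p : ℕ)) := by
      rw [← map_list_sum (Ideal.Quotient.mk finSupportIdeal)]
      congr 1
      funext p
      haveI : Fact (p : ℕ).Prime := ⟨p.2⟩
      rw [list_sum_pi_apply, List.map_map]
      exact stuffle (p : ℕ) l ks (p : ℕ)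
    have h4 : Ideal.Quotient.mk finSupportIdeal
        (fun p : Nat.Primes => Sa (p : ℕ) [l] (p : ℕ) * Sa (p : ℕ) ks (p : ℕ)) = 0 := by
      rw [Ideal.Quotient.eq_zero_iff_mem]
      refine Set.Finite.subset
        (((Set.finite_Iic (l + 1)).preimage
          (f := fun p : Nat.Primes => (p : ℕ)) (fun a _ b _ h => Subtype.ext h))) ?_
      intro p hp
      simp only [Set.mem_setOf_eq] at hp
      by_contra h
      simp only [Set.mem_preimage, Set.mem_Iic, not_le] at h
      haveI : Fact (p : ℕ).Prime := ⟨p.2⟩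
      exact hp (by rw [Sa_single_self_eq_zero (p : ℕ) l hl h, zero_mul])
    rw [h1, h2, h3, h4]
  -- reduction to words via the span
  have hspan : v * y ∈ Submodule.span ℚ wordSet := by
    have hy : y ∈ Submodule.span ℚ wordSet :=
      Submodule.subset_span ⟨[1], by simp, by simp, zword_one.symm⟩
    exact mul_mem_span_wordSet v y hy
  subst hw
  refine Submodule.span_induction
    (p := fun w _ => Z (x ^ (l - 1) * y * w + D w) = 0) ?_ ?_ ?_ ?_ hspan
  · rintro _ ⟨ks, _, hks, rfl⟩
    exact key ks hks
  · show Z (x ^ (l - 1) * y * (0 : H) + D 0) = 0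
    simp
  · intro a b _ _ ha hb
    show Z (x ^ (l - 1) * y * (a + b) + D (a + b)) = 0
    have h : x ^ (l - 1) * y * (a + b) + D (a + b)
        = (x ^ (l - 1) * y * a + D a) + (x ^ (l - 1) * y * b + D b) := by
      rw [mul_add, map_add]
      abel
    rw [h, map_add, ha, hb, add_zero]
  · intro c a _ ha
    show Z (x ^ (l - 1) * y * (c • a) + D (c • a)) = 0
    have h : x ^ (l - 1) * y * (c • a) + D (c • a)
        = c • (x ^ (l - 1) * y * a + D a) := by
      rw [map_smul, mul_smul_comm, smul_add]
    rw [h, map_smul, ha, smul_zero]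

end FMZVNote
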